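/- Let K be an abelian group, Q a C-loop, (θ,f) a C-factor set, and C = K ×_θ^f Q. Then K × {1} is contained in the center Z(C) if and only if θ_x = id_K for every x ∈ Q. -/
import Mathlib


/-- A loop: a magma with two-sided identity and bijective left/right translations. -/
class MulLoop (L : Type*) extends Mul L, One L where
  one_mul : ∀ x : L, 1 * x = x
  mul_one : ∀ x : L, x * 1 = x
  mulLeft_bijective : ∀ a : L, Function.Bijective fun x : L => a * x
  mulRight_bijective : ∀ a : L, Function.Bijective fun x : L => x * a

/-- A C-loop: a loop satisfying `x(y·yz) = (xy·y)z`; C-loops are inverse property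
loops, so we include the two-sided inverse. -/
class CLoop (L : Type*) extends MulLoop L, Inv L where
  mul_inv : ∀ x : L, x * x⁻¹ = 1
  inv_mul : ∀ x : L, x⁻¹ * x = 1
  c_law : ∀ x y z : L, x * (y * (y * z)) = ((x * y) * y) * z

/-- The nucleus of a magma with multiplication `m`: elements associating with all
pairs in all three positions. -/
def mnucleus {L : Type*} (m : L → L → L) : Set L :=
  {a | ∀ x y : L, m (m a x) y = m a (m x y) ∧ m (m x a) y = m x (m a y) ∧
        m (m x y) a = m x (m y a)}

/-- The center: nuclear elements commuting with everything. -/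
def mcenter {L : Type*} (m : L → L → L) : Set L :=
  {a ∈ mnucleus m | ∀ x : L, m a x = m x a}

/-- In the C-loop extension `C = K ×_θ^f Q` built from a C-factor set, `K × {1}`
lies in the center of `C` iff `θ_x = id` for every `x`. -/
theorem stmt4 {K : Type} [CommGroup K] {Q : Type} [CLoop Q]
    (θ : Q → MulAut K) (hθ : ∀ x y : Q, θ (x * y) = θ x * θ y)
    (f : Q → Q → K)
    (hf1 : ∀ x : Q, f x 1 = 1 ∧ f 1 x = 1)
    (hf2 : ∀ x y z : Q,
        θ (x * y) (f y z) * θ x (f y (y * z)) * f x (y * (y * z)) =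
          f x y * f (x * y) y * f ((x * y) * y) z)
    (m : K × Q → K × Q → K × Q)
    (hm : ∀ p q : K × Q, m p q = (p.1 * θ p.2 q.1 * f p.2 q.2, p.2 * q.2)) :
    (∀ a : K, ((a, 1) : K × Q) ∈ mcenter m) ↔ ∀ x : Q, θ x = MulEquiv.refl K := by
  have h1Q : ∀ x : Q, (1 : Q) * x = x := MulLoop.one_mul
  have hQ1 : ∀ x : Q, x * (1 : Q) = x := MulLoop.mul_one
  have hθ1 : θ 1 = 1 := by
    have := hθ 1 1
    rw [h1Q 1] at this
    exact mul_right_cancel (a := θ 1) (by rw [one_mul, ← this])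
  constructor
  · intro h x
    ext a
    have hc := (h a).2 (1, x)
    rw [hm, hm] at hc
    have := congrArg Prod.fst hc
    simp only at this
    rw [(hf1 x).2, (hf1 x).1, map_one] at this
    simp only [mul_one, one_mul] at this
    simpa using this.symm
  · intro h a
    have hid : ∀ (x : Q) (b : K), θ x b = b := by
      intro x b; rw [h x]; rfl
    constructor
    · intro x y
      refine ⟨?_, ?_, ?_⟩ <;> simp only [hm, hid, (hf1 _).1, (hf1 _).2, h1Q, hQ1, mul_one, one_mul]
      · exact Prod.ext (by simp only [mul_assoc, mul_comm, mul_left_comm]) rfl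
      · exact Prod.ext (by simp only [mul_assoc, mul_comm, mul_left_comm]) rfl
      · exact Prod.ext (by simp only [mul_assoc, mul_comm, mul_left_comm]) rfl
    · intro x
      simp only [hm, hid, (hf1 _).1, (hf1 _).2, h1Q, hQ1, mul_one, one_mul]
      exact Prod.ext (mul_comm a x.1) rfl
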